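/- arXiv:2309.07946 — 4 statements merged into one kernel-verified Lean document; each statement's English description precedes it below -/
import Mathlib

section
/- Let κ > 0, σ > 0 and y > 0 be real numbers. Define h₀(y) = (κ+1)y/(κ+y), h₁(y) = κ(κ+1)³y/(κ+y)⁴ and h₂(y) = −κ(κ+1)⁵ y (κ² + 3σy + κ(y−2σ))/(σ(κ+y)⁷), and for real ε set h_ε(y) = h₀(y) + ε h₁(y) + ε² h₂(y). Then the invariance-equation residual R(ε) = f(h_ε(y), y) − ε · (h₀'(y) + ε h₁'(y) + ε² h₂'(y)) · g(h_ε(y), y), where h₀', h₁', h₂' denote the derivatives with respect to y, satisfies R(ε) = O(ε³) as ε → 0; i.e., there exist constants C > 0 and δ > 0 such that |R(ε)| ≤ C|ε|³ whenever |ε| < δ. -/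
/-- Fast vector field of the Michaelis–Menten slow subsystem. -/
noncomputable def MMf (κ x y : ℝ) : ℝ := y - ((κ + y) / (κ + 1)) * x

/-- Slow vector field of the Michaelis–Menten slow subsystem. -/
noncomputable def MMg (κ σ x y : ℝ) : ℝ := σ⁻¹ * (-(κ + 1) * y + (κ - σ + y) * x)

noncomputable def MMh0 (κ y : ℝ) : ℝ := (κ + 1) * y / (κ + y)

noncomputable def MMh1 (κ y : ℝ) : ℝ := κ * (κ + 1) ^ 3 * y / (κ + y) ^ 4

noncomputable def MMh2 (κ σ y : ℝ) : ℝ :=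
  -(κ * (κ + 1) ^ 5 * y * (κ ^ 2 + 3 * σ * y + κ * (y - 2 * σ))) / (σ * (κ + y) ^ 7)

noncomputable def MMhε (κ σ y ε : ℝ) : ℝ := MMh0 κ y + ε * MMh1 κ y + ε ^ 2 * MMh2 κ σ y

/-- derivative value of `MMh0 κ`. -/
noncomputable def MMd0 (κ y : ℝ) : ℝ := κ * (κ + 1) / (κ + y) ^ 2

/-- derivative value of `MMh1 κ`. -/
noncomputable def MMd1 (κ y : ℝ) : ℝ := κ * (κ + 1) ^ 3 * (κ - 3 * y) / (κ + y) ^ 5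

/-- derivative value of `MMh2 κ σ`. -/
noncomputable def MMd2 (κ σ y : ℝ) : ℝ :=
  -(κ * (κ + 1) ^ 5 *
      (((κ ^ 2 - 2 * κ * σ) + 2 * (3 * σ + κ) * y) * (κ + y) -
        7 * ((κ ^ 2 - 2 * κ * σ) * y + (3 * σ + κ) * y ^ 2))) / (σ * (κ + y) ^ 8)

lemma hasDerivAt_MMh0 (κ y : ℝ) (h : κ + y ≠ 0) :
    HasDerivAt (MMh0 κ) (MMd0 κ y) y := by
  have hn : HasDerivAt (fun y : ℝ => (κ + 1) * y) (κ + 1) y := by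
    simpa using (hasDerivAt_id y).const_mul (κ + 1)
  have hd : HasDerivAt (fun y : ℝ => κ + y) 1 y := by
    simpa using (hasDerivAt_id y).const_add κ
  have := hn.div hd h
  refine HasDerivAt.congr_deriv this ?_
  rw [MMd0]
  field_simp
  ring

lemma hasDerivAt_MMh1 (κ y : ℝ) (h : κ + y ≠ 0) :
    HasDerivAt (MMh1 κ) (MMd1 κ y) y := by
  have hn : HasDerivAt (fun y : ℝ => κ * (κ + 1) ^ 3 * y) (κ * (κ + 1) ^ 3) y := by
    simpa using (hasDerivAt_id y).const_mul (κ * (κ + 1) ^ 3)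
  have hd : HasDerivAt (fun y : ℝ => (κ + y) ^ 4) (4 * (κ + y) ^ 3) y := by
    have := ((hasDerivAt_id y).const_add κ).pow 4
    simp at this
    exact this
  have hdn : (κ + y) ^ 4 ≠ 0 := pow_ne_zero _ h
  have := hn.div hd hdn
  refine HasDerivAt.congr_deriv this ?_
  rw [MMd1]
  field_simp
  ring

lemma hasDerivAt_MMh2 (κ σ y : ℝ) (h : κ + y ≠ 0) (hσ : σ ≠ 0) :
    HasDerivAt (MMh2 κ σ) (MMd2 κ σ y) y := by
  have hn : HasDerivAt
      (fun y : ℝ => -(κ * (κ + 1) ^ 5 * y * (κ ^ 2 + 3 * σ * y + κ * (y - 2 * σ))))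
      (-(κ * (κ + 1) ^ 5 * (κ ^ 2 + 3 * σ * y + κ * (y - 2 * σ)) +
          κ * (κ + 1) ^ 5 * y * (3 * σ + κ))) y := by
    have h1 : HasDerivAt (fun y : ℝ => κ * (κ + 1) ^ 5 * y) (κ * (κ + 1) ^ 5) y := by
      simpa using (hasDerivAt_id y).const_mul (κ * (κ + 1) ^ 5)
    have h2 : HasDerivAt (fun y : ℝ => κ ^ 2 + 3 * σ * y + κ * (y - 2 * σ)) (3 * σ + κ) y := by
      have ha : HasDerivAt (fun y : ℝ => κ ^ 2 + 3 * σ * y) (3 * σ) y := by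
        simpa using ((hasDerivAt_id y).const_mul (3 * σ)).const_add (κ ^ 2)
      have hb : HasDerivAt (fun y : ℝ => κ * (y - 2 * σ)) κ y := by
        simpa using ((hasDerivAt_id y).sub_const (2 * σ)).const_mul κ
      exact ha.add hb
    have := (h1.mul h2).neg
    exact this
  have hd : HasDerivAt (fun y : ℝ => σ * (κ + y) ^ 7) (σ * (7 * (κ + y) ^ 6)) y := by
    have := (((hasDerivAt_id y).const_add κ).pow 7).const_mul σ
    simp at this
    exact this
  have hdn : σ * (κ + y) ^ 7 ≠ 0 := mul_ne_zero hσ (pow_ne_zero _ h)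
  have := hn.div hd hdn
  refine HasDerivAt.congr_deriv this ?_
  rw [MMd2]
  field_simp
  ring

lemma mm_c0 (κ σ y : ℝ) (hκ : κ + y ≠ 0) (hκ1 : (κ:ℝ) + 1 ≠ 0) :
    MMf κ (MMh0 κ y) y = 0 := by
  unfold MMf MMh0
  field_simp
  ring

lemma mm_c1 (κ σ y : ℝ) (hD : κ + y ≠ 0) (hκ1 : (κ:ℝ) + 1 ≠ 0) (hσ : σ ≠ 0) :
    (κ + y) / (κ + 1) * MMh1 κ y + MMd0 κ y * MMg κ σ (MMh0 κ y) y = 0 := by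
  unfold MMh1 MMd0 MMg MMh0
  field_simp
  ring

lemma mm_c2 (κ σ y : ℝ) (hD : κ + y ≠ 0) (hκ1 : (κ:ℝ) + 1 ≠ 0) (hσ : σ ≠ 0) :
    (κ + y) / (κ + 1) * MMh2 κ σ y +
      MMd0 κ y * ((κ - σ + y) / σ) * MMh1 κ y + MMd1 κ y * MMg κ σ (MMh0 κ y) y = 0 := by
  unfold MMh2 MMd0 MMd1 MMh1 MMg MMh0
  field_simp
  ring

/-- Key factorization of the residual. -/
lemma mm_key (κ σ y ε : ℝ) (hD : κ + y ≠ 0) (hκ1 : (κ:ℝ) + 1 ≠ 0) (hσ : σ ≠ 0) :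
    MMf κ (MMhε κ σ y ε) y -
        ε * (MMd0 κ y + ε * MMd1 κ y + ε ^ 2 * MMd2 κ σ y) * MMg κ σ (MMhε κ σ y ε) y =
      ε ^ 3 *
        (-(MMd0 κ y * ((κ - σ + y) / σ) * MMh2 κ σ y +
            MMd1 κ y * ((κ - σ + y) / σ) * MMh1 κ y + MMd2 κ σ y * MMg κ σ (MMh0 κ y) y) +
          ε * (-(MMd1 κ y * ((κ - σ + y) / σ) * MMh2 κ σ y +
            MMd2 κ σ y * ((κ - σ + y) / σ) * MMh1 κ y)) +
          ε ^ 2 * (-(MMd2 κ σ y * ((κ - σ + y) / σ) * MMh2 κ σ y))) := by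
  have hf : MMf κ (MMhε κ σ y ε) y =
      MMf κ (MMh0 κ y) y - (κ + y) / (κ + 1) * (ε * MMh1 κ y + ε ^ 2 * MMh2 κ σ y) := by
    unfold MMf MMhε; ring
  have hg : MMg κ σ (MMhε κ σ y ε) y =
      MMg κ σ (MMh0 κ y) y + (κ - σ + y) / σ * (ε * MMh1 κ y + ε ^ 2 * MMh2 κ σ y) := by
    unfold MMg MMhε
    field_simp
    ring
  rw [hf, hg]
  have hc0 := mm_c0 κ σ y hD hκ1
  have hc1 := mm_c1 κ σ y hD hκ1 hσ
  have hc2 := mm_c2 κ σ y hD hκ1 hσ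
  linear_combination hc0 - ε * hc1 - ε ^ 2 * hc2

/-- The invariance-equation residual of the `O(ε²)` regular expansion of the SIM of the
Michaelis–Menten slow subsystem is `O(ε³)` as `ε → 0`. -/
theorem mm_invariance_residual_isBigO (κ σ y : ℝ) (hκ : 0 < κ) (hσ : 0 < σ) (hy : 0 < y) :
    ∃ C > (0 : ℝ), ∃ δ > (0 : ℝ), ∀ ε : ℝ, |ε| < δ →
      |MMf κ (MMhε κ σ y ε) y -
        ε * (deriv (MMh0 κ) y + ε * deriv (MMh1 κ) y + ε ^ 2 * deriv (MMh2 κ σ) y) *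
          MMg κ σ (MMhε κ σ y ε) y| ≤ C * |ε| ^ 3 := by
  have hD : κ + y ≠ 0 := by positivity
  have hκ1 : (κ:ℝ) + 1 ≠ 0 := by positivity
  have hσ' : σ ≠ 0 := ne_of_gt hσ
  have hd0 : deriv (MMh0 κ) y = MMd0 κ y := (hasDerivAt_MMh0 κ y hD).deriv
  have hd1 : deriv (MMh1 κ) y = MMd1 κ y := (hasDerivAt_MMh1 κ y hD).deriv
  have hd2 : deriv (MMh2 κ σ) y = MMd2 κ σ y := (hasDerivAt_MMh2 κ σ y hD hσ').deriv
  set q0 : ℝ := -(MMd0 κ y * ((κ - σ + y) / σ) * MMh2 κ σ y +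
      MMd1 κ y * ((κ - σ + y) / σ) * MMh1 κ y + MMd2 κ σ y * MMg κ σ (MMh0 κ y) y) with hq0
  set q1 : ℝ := -(MMd1 κ y * ((κ - σ + y) / σ) * MMh2 κ σ y +
      MMd2 κ σ y * ((κ - σ + y) / σ) * MMh1 κ y) with hq1
  set q2 : ℝ := -(MMd2 κ σ y * ((κ - σ + y) / σ) * MMh2 κ σ y) with hq2
  refine ⟨|q0| + |q1| + |q2| + 1, by positivity, 1, one_pos, fun ε hε => ?_⟩
  rw [hd0, hd1, hd2, mm_key κ σ y ε hD hκ1 hσ']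
  rw [abs_mul, abs_pow]
  have hεnn : (0:ℝ) ≤ |ε| := abs_nonneg ε
  have hQ : |q0 + ε * q1 + ε ^ 2 * q2| ≤ |q0| + |q1| + |q2| + 1 := by
    calc |q0 + ε * q1 + ε ^ 2 * q2| ≤ |q0| + |ε * q1| + |ε ^ 2 * q2| := by
          exact (abs_add_le _ _).trans (by gcongr; exact abs_add_le _ _)
      _ = |q0| + |ε| * |q1| + |ε| ^ 2 * |q2| := by rw [abs_mul, abs_mul, abs_pow]
      _ ≤ |q0| + |q1| + |q2| + 1 := by
          have h1 : |ε| * |q1| ≤ |q1| := mul_le_of_le_one_left (abs_nonneg q1) hε.le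
          have h2 : |ε| ^ 2 * |q2| ≤ |q2| := by
            have : |ε| ^ 2 ≤ 1 := by nlinarith
            exact mul_le_of_le_one_left (abs_nonneg q2) this
          linarith
  calc |ε| ^ 3 * |q0 + ε * q1 + ε ^ 2 * q2| ≤ |ε| ^ 3 * (|q0| + |q1| + |q2| + 1) := by
        gcongr
    _ = (|q0| + |q1| + |q2| + 1) * |ε| ^ 3 := by ring
end

section
/- Let a, b, k > 0, y > 0, z > 0 and ε > 0 be real numbers, set D = ky(ky+ε) + εz(2εy − k(a+y²)) and q = 1 + 4ε²ky(εby + z(2εz(a+y²) − y(ky + ε(2+a+y²))))/D², and assume D ≠ 0 and q ≥ 0. Define x = (yz/k + (y − z(a+y²))/(2ε) + ky²/(2ε²)) · (1 − √q). Then x exactly satisfies the implicit CSP one-iteration SIM equation for the 3D Sel'kov system: y²z − kxy + ε [y²(z(a+y²) − b) + (2yz − kx)(y − z(a+y²) − εx)]/(ky) = 0. -/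
/-- The explicit CSP one-iteration SIM approximation exactly satisfies the implicit CSP
one-iteration SIM equation for the 3D Sel'kov system. -/
theorem selkov_csp_satisfies_implicit (a b k y z ε : ℝ)
    (ha : 0 < a) (hb : 0 < b) (hk : 0 < k) (hy : 0 < y) (hz : 0 < z) (hε : 0 < ε)
    (D q : ℝ)
    (hD : D = k * y * (k * y + ε) + ε * z * (2 * ε * y - k * (a + y ^ 2)))
    (hq : q = 1 + 4 * ε ^ 2 * k * y *
      (ε * b * y + z * (2 * ε * z * (a + y ^ 2) - y * (k * y + ε * (2 + a + y ^ 2)))) / D ^ 2)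
    (hDne : D ≠ 0) (hqnn : 0 ≤ q) (x : ℝ)
    (hx : x = (y * z / k + (y - z * (a + y ^ 2)) / (2 * ε) + k * y ^ 2 / (2 * ε ^ 2)) *
      (1 - Real.sqrt q)) :
    y ^ 2 * z - k * x * y +
      ε * (y ^ 2 * (z * (a + y ^ 2) - b) +
        (2 * y * z - k * x) * (y - z * (a + y ^ 2) - ε * x)) / (k * y) = 0 := by
  have hkne := hk.ne'
  have hyne := hy.ne'
  have hεne := hε.ne'
  set s := Real.sqrt q with hs_def
  have hs : s * s = q := Real.mul_self_sqrt hqnn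
  have hx' : 2 * ε ^ 2 * k * x = D * (1 - s) := by
    rw [hx, hD]; field_simp; ring
  have hq' : q * D ^ 2 = D ^ 2 + 4 * ε ^ 2 * k * y *
      (ε * b * y + z * (2 * ε * z * (a + y ^ 2) - y * (k * y + ε * (2 + a + y ^ 2)))) := by
    rw [hq]; field_simp
  have hkey : ε ^ 2 * k * x ^ 2 - D * x +
      (k * y ^ 3 * z + ε * (y ^ 2 * (z * (a + y ^ 2) - b) + 2 * y * z * (y - z * (a + y ^ 2)))) = 0 := by
    have h1 : (2 * ε ^ 2 * k * x) * (2 * ε ^ 2 * k * x) = (D * (1 - s)) * (D * (1 - s)) := by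
      rw [hx']
    have h4 : 4 * ε ^ 2 * k * (ε ^ 2 * k * x ^ 2 - D * x +
        (k * y ^ 3 * z + ε * (y ^ 2 * (z * (a + y ^ 2) - b) + 2 * y * z * (y - z * (a + y ^ 2))))) = 0 := by
      linear_combination h1 - 2 * D * hx' + D ^ 2 * hs + hq'
    have h5 : (4 : ℝ) * ε ^ 2 * k ≠ 0 := by positivity
    have := mul_eq_zero.mp h4
    tauto
  field_simp
  linear_combination hkey + x * hD
end

section
/- Let a, b, k > 0, y > 0 and z > 0. With h₀(y,z) = yz/k and h₁(y,z) = (z−b)/k² + z(a+y²)(y−z)/(k²y), the first-order matching identity of the invariance equation for the 3D Sel'kov system holds: k·h₁(y,z)·y + (∂h₀/∂y)(y,z)·(az + y²z − y) + (∂h₀/∂z)(y,z)·(−az − y²z + b) = 0, where ∂h₀/∂y and ∂h₀/∂z denote partial derivatives. -/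
noncomputable def Selkovh0 (k : ℝ) (y z : ℝ) : ℝ := y * z / k

noncomputable def Selkovh1 (a b k : ℝ) (y z : ℝ) : ℝ :=
  (z - b) / k ^ 2 + z * (a + y ^ 2) * (y - z) / (k ^ 2 * y)

/-- First-order matching identity of the invariance equation for the 3D Sel'kov system. -/
theorem selkov_first_order_matching (a b k y z : ℝ)
    (ha : 0 < a) (hb : 0 < b) (hk : 0 < k) (hy : 0 < y) (hz : 0 < z) :
    k * Selkovh1 a b k y z * y +
      deriv (fun y' : ℝ => Selkovh0 k y' z) y * (a * z + y ^ 2 * z - y) +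
      deriv (fun z' : ℝ => Selkovh0 k y z') z * (-a * z - y ^ 2 * z + b) = 0 := by
  have h1 : deriv (fun y' : ℝ => Selkovh0 k y' z) y = z / k := by
    unfold Selkovh0
    simp [div_eq_mul_inv, mul_comm, mul_assoc]
  have h2 : deriv (fun z' : ℝ => Selkovh0 k y z') z = y / k := by
    unfold Selkovh0
    simp [div_eq_mul_inv, mul_comm, mul_assoc]
  rw [h1, h2]
  unfold Selkovh1
  field_simp
  ring
end

section
/- Let M and K be positive natural numbers, let G₁ be a real M×K matrix and G₂ a real K×M matrix, and assume the M×M matrix I + G₁G₂ and the K×K matrix I + G₂G₁ are both invertible, with Z₁ = (I + G₁G₂)⁻¹ and Z₂ = (I + G₂G₁)⁻¹. Define the (M+K)×M block matrix â_f with blocks [I; G₂] (identity on top, G₂ below), the (M+K)×K block matrix â_s with blocks [−G₁; I], the M×(M+K) block matrix b̂^f = Z₁·[I | G₁], and the K×(M+K) block matrix b̂^s = Z₂·[−G₂ | I]. Then the CSP orthogonality (duality) conditions hold: b̂^f â_f = I_M, b̂^f â_s = 0, b̂^s â_f = 0, b̂^s â_s = I_K, and â_f b̂^f + â_s b̂^s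 = I_{M+K}. -/
open Matrix

/-- The CSP basis vectors after one `b`-refinement and one `a`-refinement satisfy the
CSP orthogonality (duality) conditions. -/
theorem csp_basis_orthogonality (M K : ℕ) (hM : 0 < M) (hK : 0 < K)
    (G₁ : Matrix (Fin M) (Fin K) ℝ) (G₂ : Matrix (Fin K) (Fin M) ℝ)
    (h₁ : IsUnit (1 + G₁ * G₂)) (h₂ : IsUnit (1 + G₂ * G₁))
    (Z₁ : Matrix (Fin M) (Fin M) ℝ) (hZ₁ : Z₁ = (1 + G₁ * G₂)⁻¹)
    (Z₂ : Matrix (Fin K) (Fin K) ℝ) (hZ₂ : Z₂ = (1 + G₂ * G₁)⁻¹)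
    (af : Matrix (Fin M ⊕ Fin K) (Fin M) ℝ) (haf : af = Matrix.fromRows 1 G₂)
    (as : Matrix (Fin M ⊕ Fin K) (Fin K) ℝ) (has : as = Matrix.fromRows (-G₁) 1)
    (bf : Matrix (Fin M) (Fin M ⊕ Fin K) ℝ) (hbf : bf = Z₁ * Matrix.fromCols 1 G₁)
    (bs : Matrix (Fin K) (Fin M ⊕ Fin K) ℝ) (hbs : bs = Z₂ * Matrix.fromCols (-G₂) 1) :
    bf * af = 1 ∧ bf * as = 0 ∧ bs * af = 0 ∧ bs * as = 1 ∧ af * bf + as * bs = 1 := by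
  have hd₁ : IsUnit (1 + G₁ * G₂).det := (Matrix.isUnit_iff_isUnit_det _).mp h₁
  have hd₂ : IsUnit (1 + G₂ * G₁).det := (Matrix.isUnit_iff_isUnit_det _).mp h₂
  have e₁ : Z₁ * (1 + G₁ * G₂) = 1 := by rw [hZ₁]; exact Matrix.nonsing_inv_mul _ hd₁
  have e₁' : (1 + G₁ * G₂) * Z₁ = 1 := by rw [hZ₁]; exact Matrix.mul_nonsing_inv _ hd₁
  have e₂ : Z₂ * (1 + G₂ * G₁) = 1 := by rw [hZ₂]; exact Matrix.nonsing_inv_mul _ hd₂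
  have e₂' : (1 + G₂ * G₁) * Z₂ = 1 := by rw [hZ₂]; exact Matrix.mul_nonsing_inv _ hd₂
  have key₁ : (1 + G₁ * G₂) * G₁ = G₁ * (1 + G₂ * G₁) := by
    rw [Matrix.add_mul, Matrix.mul_add, Matrix.one_mul, Matrix.mul_one, Matrix.mul_assoc]
  have key₂ : (1 + G₂ * G₁) * G₂ = G₂ * (1 + G₁ * G₂) := by
    rw [Matrix.add_mul, Matrix.mul_add, Matrix.one_mul, Matrix.mul_one, Matrix.mul_assoc]
  have comm₁ : Z₁ * G₁ = G₁ * Z₂ := by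
    calc Z₁ * G₁ = Z₁ * (G₁ * ((1 + G₂ * G₁) * Z₂)) := by rw [e₂', Matrix.mul_one]
    _ = Z₁ * (1 + G₁ * G₂) * (G₁ * Z₂) := by
        rw [← Matrix.mul_assoc G₁, ← key₁]
        simp only [Matrix.mul_assoc]
    _ = G₁ * Z₂ := by rw [e₁, Matrix.one_mul]
  have comm₂ : Z₂ * G₂ = G₂ * Z₁ := by
    calc Z₂ * G₂ = Z₂ * (G₂ * ((1 + G₁ * G₂) * Z₁)) := by rw [e₁', Matrix.mul_one]
    _ = Z₂ * (1 + G₂ * G₁) * (G₂ * Z₁) := by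
        rw [← Matrix.mul_assoc G₂, ← key₂]
        simp only [Matrix.mul_assoc]
    _ = G₂ * Z₁ := by rw [e₂, Matrix.one_mul]
  subst haf has hbf hbs
  refine ⟨?_, ?_, ?_, ?_, ?_⟩
  · rw [Matrix.mul_assoc, fromCols_mul_fromRows]
    simpa using e₁
  · rw [Matrix.mul_assoc, fromCols_mul_fromRows]
    simp
  · rw [Matrix.mul_assoc, fromCols_mul_fromRows]
    simp
  · rw [Matrix.mul_assoc, fromCols_mul_fromRows]
    simpa [add_comm] using e₂
  · have p1 : Matrix.fromRows (1 : Matrix (Fin M) (Fin M) ℝ) G₂ * (Z₁ * Matrix.fromCols 1 G₁)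
        = Matrix.fromBlocks Z₁ (Z₁ * G₁) (G₂ * Z₁) (G₂ * Z₁ * G₁) := by
      rw [← Matrix.mul_assoc, fromRows_mul, Matrix.one_mul, fromRows_mul_fromCols,
        Matrix.mul_one, Matrix.mul_one]
    have p2 : Matrix.fromRows (-G₁) (1 : Matrix (Fin K) (Fin K) ℝ) * (Z₂ * Matrix.fromCols (-G₂) 1)
        = Matrix.fromBlocks (G₁ * Z₂ * G₂) (-(G₁ * Z₂)) (-(Z₂ * G₂)) Z₂ := by
      rw [← Matrix.mul_assoc, fromRows_mul, Matrix.one_mul, fromRows_mul_fromCols,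
        Matrix.mul_one, Matrix.mul_one, Matrix.neg_mul, Matrix.neg_mul, Matrix.mul_neg,
        Matrix.mul_neg, neg_neg]
    rw [p1, p2, Matrix.fromBlocks_add, ← fromBlocks_one, Matrix.fromBlocks_inj]
    refine ⟨?_, ?_, ?_, ?_⟩
    · -- top-left
      rw [Matrix.mul_assoc, comm₂, ← Matrix.mul_assoc]
      calc (Z₁ + G₁ * G₂ * Z₁ : Matrix (Fin M) (Fin M) ℝ)
          = (1 + G₁ * G₂) * Z₁ := by rw [Matrix.add_mul, Matrix.one_mul]
      _ = 1 := e₁'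
    · rw [comm₁]; exact add_neg_cancel _
    · rw [comm₂]; exact add_neg_cancel _
    · rw [Matrix.mul_assoc, comm₁, ← Matrix.mul_assoc]
      calc (G₂ * G₁ * Z₂ + Z₂ : Matrix (Fin K) (Fin K) ℝ)
          = (1 + G₂ * G₁) * Z₂ := by rw [Matrix.add_mul, Matrix.one_mul, add_comm]
      _ = 1 := e₂'
end
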